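/- Let p be a prime, k a perfect field of characteristic p, K the fraction field of the ring W(k) of p-typical Witt vectors of k, and σ : K → K the field automorphism induced by the Witt vector Frobenius of W(k). Let M be the K-vector space with basis x₀, y₀, z₀, x₁, y₁, z₁, and let F : M → M be the σ-semilinear additive map (F(c·m) = σ(c)·F(m) for c ∈ K, m ∈ M) determined by F(x₀) = x₁, F(y₀) = y₁, F(z₀) = p·z₁, F(x₁) = z₀, F(y₁) = p·y₀, F(z₁) = p·x₀. Then the set of elements m in the K-span of {x₀, y₀, z₀} satisfying F(F(m)) = p·m is exactly { p·α·x₀ + β·y₀ + σ²(α)·z₀ : α, β ∈ K, σ⁴(α) = α, σ²(β) = β }. -/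

import Mathlib

private lemma coeff3 {K M : Type*} [Field K] [AddCommGroup M] [Module K M]
    (b : Module.Basis (Fin 6) K M) {u v w u' v' w' : K}
    (h : u • b 0 + (v • b 1 + w • b 2) = u' • b 0 + (v' • b 1 + w' • b 2)) :
    u = u' ∧ v = v' ∧ w = w' := by
  refine ⟨?_, ?_, ?_⟩
  · have := congrArg (fun m => b.repr m 0) h
    simpa [Finsupp.single_apply] using this
  · have := congrArg (fun m => b.repr m 1) h
    simpa [Finsupp.single_apply] using this
  · have := congrArg (fun m => b.repr m 2) h
    simpa [Finsupp.single_apply] using this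

theorem stmt_3 (p : ℕ) [Fact p.Prime] (k : Type*) [Field k] [CharP k p]
    [PerfectRing k p]
    (K : Type*) [Field K] [Algebra (WittVector p k) K]
    [IsFractionRing (WittVector p k) K]
    (σ : K ≃+* K)
    (hσ : ∀ a : WittVector p k,
      σ (algebraMap (WittVector p k) K a) =
        algebraMap (WittVector p k) K (WittVector.frobenius a))
    {M : Type*} [AddCommGroup M] [Module K M] (b : Module.Basis (Fin 6) K M)
    (F : M →+ M)
    (hsemi : ∀ (c : K) (m : M), F (c • m) = σ c • F m)
    (h0 : F (b 0) = b 3) (h1 : F (b 1) = b 4) (h2 : F (b 2) = (p : K) • b 5)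
    (h3 : F (b 3) = b 2) (h4 : F (b 4) = (p : K) • b 1)
    (h5 : F (b 5) = (p : K) • b 0) :
    {m : M | m ∈ Submodule.span K ({b 0, b 1, b 2} : Set M) ∧
        F (F m) = (p : K) • m} =
      {m : M | ∃ α β : K, σ (σ (σ (σ α))) = α ∧ σ (σ β) = β ∧
        m = ((p : K) * α) • b 0 + β • b 1 + σ (σ α) • b 2} := by
  have hp : σ (p : K) = (p : K) := by
    have := hσ (p : WittVector p k)
    simpa using this
  have hpne : (p : K) ≠ 0 := by
    have h1' : (p : WittVector p k) ≠ 0 := WittVector.p_nonzero p k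
    have h2' := (IsFractionRing.injective (WittVector p k) K).ne h1'
    simpa using h2'
  have key : ∀ a c d : K,
      F (F (a • b 0 + (c • b 1 + d • b 2))) =
        ((p : K) * (p : K) * σ (σ d)) • b 0 +
          (((p : K) * σ (σ c)) • b 1 + σ (σ a) • b 2) := by
    intro a c d
    have s1 : F (a • b 0 + (c • b 1 + d • b 2)) =
        σ a • b 3 + (σ c • b 4 + (σ d * (p : K)) • b 5) := by
      rw [map_add, map_add, hsemi a, hsemi c, hsemi d, h0, h1, h2, smul_smul]
    rw [s1, map_add, map_add, hsemi (σ a), hsemi (σ c), hsemi (σ d * (p : K)),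
      h3, h4, h5, map_mul, hp, smul_smul, smul_smul]
    rw [mul_comm (σ (σ c)) (p : K)]
    module
  ext m
  simp only [Set.mem_setOf_eq]
  constructor
  · rintro ⟨hmem, heq⟩
    rw [Submodule.mem_span_insert] at hmem
    obtain ⟨a, m1, hm1, rfl⟩ := hmem
    rw [Submodule.mem_span_insert] at hm1
    obtain ⟨c, m2, hm2, rfl⟩ := hm1
    rw [Submodule.mem_span_singleton] at hm2
    obtain ⟨d, rfl⟩ := hm2
    rw [key] at heq
    rw [smul_add, smul_add, smul_smul, smul_smul, smul_smul] at heq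
    obtain ⟨e0, e1, e2⟩ := coeff3 b heq
    have ha : a = (p : K) * σ (σ d) := by
      have : (p : K) * ((p : K) * σ (σ d)) = (p : K) * a := by linear_combination e0
      exact (mul_left_cancel₀ hpne this).symm
    have hc : σ (σ c) = c := mul_left_cancel₀ hpne e1
    have hd : σ (σ (σ (σ d))) = d := by
      have h' := e2
      rw [ha, map_mul, map_mul, hp, hp] at h'
      exact mul_left_cancel₀ hpne h'
    refine ⟨σ (σ d), c, ?_, hc, ?_⟩
    · rw [hd]
    · rw [hd, ← ha]
      abel
  · rintro ⟨α, β, hα, hβ, rfl⟩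
    constructor
    · refine Submodule.add_mem _ (Submodule.add_mem _ ?_ ?_) ?_ <;>
        exact Submodule.smul_mem _ _ (Submodule.subset_span (by simp))
    · have hform : ((p : K) * α) • b 0 + β • b 1 + σ (σ α) • b 2 =
          ((p : K) * α) • b 0 + (β • b 1 + σ (σ α) • b 2) := by abel
      rw [hform, key, hβ, map_mul, map_mul, hp, hp, hα]
      rw [smul_add, smul_add, smul_smul, smul_smul, smul_smul]
      module
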